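/- Let G be a K-CSA group and let g, h ∈ G be elements of infinite order. If ⟨g, h⟩ is virtually abelian, then g^{K!} and h^{K!} commute, and g and h lie in the same maximal virtually abelian subgroup M(g) = M(h). -/

import Mathlib

/-- A subgroup `M` is virtually abelian if it has an abelian subgroup of finite index. -/
def IsVirtAbelian {G : Type*} [Group G] (M : Subgroup G) : Prop :=
  ∃ A : Subgroup G, A ≤ M ∧ (∀ x ∈ A, ∀ y ∈ A, x * y = y * x) ∧ A.relIndex M ≠ 0

/-- A subgroup `M` is `K`-virtually abelian if it has an abelian subgroup of index at most `K`. -/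
def IsKVirtAbelian {G : Type*} [Group G] (K : ℕ) (M : Subgroup G) : Prop :=
  ∃ A : Subgroup G, A ≤ M ∧ (∀ x ∈ A, ∀ y ∈ A, x * y = y * x) ∧
    A.relIndex M ≠ 0 ∧ A.relIndex M ≤ K

/-- `M` is `K`-virtually torsion-free abelian: it has a torsion-free abelian subgroup of
index at most `K`. -/
def IsKVirtTorsionFreeAbelian {G : Type*} [Group G] (K : ℕ) (M : Subgroup G) : Prop :=
  ∃ A : Subgroup G, A ≤ M ∧ (∀ x ∈ A, ∀ y ∈ A, x * y = y * x) ∧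
    (∀ x ∈ A, x ≠ 1 → ¬ IsOfFinOrder x) ∧ A.relIndex M ≠ 0 ∧ A.relIndex M ≤ K

/-- `M` is the (unique) maximal virtually abelian subgroup containing `g`: it is virtually
abelian, contains `g`, and contains every virtually abelian subgroup containing `g`. -/
def IsMaxVirtAbelianOf {G : Type*} [Group G] (g : G) (M : Subgroup G) : Prop :=
  g ∈ M ∧ IsVirtAbelian M ∧ ∀ M' : Subgroup G, g ∈ M' → IsVirtAbelian M' → M' ≤ M

/-- `G` is a `K`-CSA group: every finite subgroup has order at most `K`; every element of
infinite order lies in a unique maximal virtually abelian subgroup `M(g)`, which is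
`K`-virtually torsion-free abelian and equal to its own normalizer. -/
def IsKCSAGroup (K : ℕ) (G : Type*) [Group G] : Prop :=
  0 < K ∧
  (∀ H : Subgroup G, (H : Set G).Finite → Nat.card H ≤ K) ∧
  (∀ g : G, ¬ IsOfFinOrder g → ∃ M : Subgroup G,
    IsMaxVirtAbelianOf g M ∧ IsKVirtTorsionFreeAbelian K M ∧ Subgroup.normalizer (M : Set G) = M)

/-- In a `K`-CSA group, if `g`, `h` have infinite order and `⟨g,h⟩` is virtually abelian,
then `g^{K!}` and `h^{K!}` commute and `M(g) = M(h)`. -/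
theorem stmt_5 {G : Type*} [Group G] {K : ℕ} (hG : IsKCSAGroup K G) (g h : G)
    (hg : ¬ IsOfFinOrder g) (hh : ¬ IsOfFinOrder h)
    (hva : IsVirtAbelian (Subgroup.closure ({g, h} : Set G))) :
    Commute (g ^ K.factorial) (h ^ K.factorial) ∧
      ∀ M M' : Subgroup G,
        IsMaxVirtAbelianOf g M → IsMaxVirtAbelianOf h M' → M = M' := by
  have hgc : g ∈ Subgroup.closure ({g, h} : Set G) :=
    Subgroup.subset_closure (Set.mem_insert _ _)
  have hhc : h ∈ Subgroup.closure ({g, h} : Set G) :=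
    Subgroup.subset_closure (Set.mem_insert_of_mem _ rfl)
  constructor
  · obtain ⟨M, hM, ⟨A, hAM, hab, _, hne, hK⟩, _⟩ := hG.2.2 g hg
    have hcl : Subgroup.closure ({g, h} : Set G) ≤ M := hM.2.2 _ hgc hva
    have key : ∀ x ∈ M, x ^ K.factorial ∈ A := by
      intro x hx
      have := Subgroup.pow_mem_of_relIndex_ne_zero_of_dvd hne hx
        (n := K.factorial) (fun m hm hle => Nat.dvd_factorial hm (hle.trans hK))
      exact this.1
    exact hab _ (key g (hcl hgc)) _ (key h (hcl hhc))
  · intro M M' hM hM'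
    have h1 : Subgroup.closure ({g, h} : Set G) ≤ M := hM.2.2 _ hgc hva
    have h2 : Subgroup.closure ({g, h} : Set G) ≤ M' := hM'.2.2 _ hhc hva
    exact le_antisymm (hM'.2.2 M (h1 hhc) hM.2.1) (hM.2.2 M' (h2 hgc) hM'.2.1)
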